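/- Consider the Black-Scholes model $S_T = \frac{B_T^{r}}{B_t^{r}} S_t \exp\big(-\frac{\sigma^2}{2}(T-t) + \sigma(W_T - W_t)\big)$ with $B_t^r = e^{rt}$ and $W$ a standard Brownian motion under $\mathbb{Q}$. Let $\Phi: \mathbb{R}_{>0} \to \mathbb{R}$ be continuously differentiable with $\Phi$ and $\Phi'$ of polynomial growth, and define the delta $\hat\Delta(t, S_t) = \frac{\partial}{\partial S}\mathbb{E}^{\mathbb{Q}}\big[e^{-r(T-t)}\Phi(S_T) \mid \mathcal{F}_t\big]$. Then the process $t \mapsto \hat\Delta(t, S_t)\frac{S_t}{B_t^r}$ is a $\mathbb{Q}$-martingale; equivalently, $\hat\Delta(t,S_t)\frac{S_t}{B_t^r} = \mathbb{E}^{\mathbb{Q}}\big[\Phi'(S_T)\frac{S_T}{B_T^r} \mid \mathcal{F}_t\big]$. -/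

import Mathlib

open MeasureTheory ProbabilityTheory Real

lemma integrable_exp_mul_gaussianReal (a : ℝ) :
    Integrable (fun y ↦ Real.exp (a * y)) (gaussianReal 0 1) := by
  rw [gaussianReal_of_var_ne_zero 0 one_ne_zero,
    integrable_withDensity_iff (measurable_gaussianPDF 0 1)
      (ae_of_all _ fun y ↦ ENNReal.ofReal_lt_top)]
  have h : (fun y ↦ Real.exp (a * y) * (gaussianPDF 0 1 y).toReal)
      = fun y ↦ (Real.sqrt (2 * π))⁻¹ * (Real.exp (a ^ 2 / 2)
          * Real.exp (-(1/2) * (y - a) ^ 2)) := by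
    ext y
    rw [gaussianPDF, ENNReal.toReal_ofReal (gaussianPDFReal_nonneg _ _ _), gaussianPDFReal]
    push_cast
    rw [mul_comm (rexp (a * y)), mul_assoc, ← Real.exp_add, ← Real.exp_add, mul_one,
      Real.exp_eq_exp.mpr (by ring : -(y - 0) ^ 2 / (2*1) + a * y
        = a ^ 2 / 2 + -(1/2) * (y - a) ^ 2)]
  rw [h]
  exact (((integrable_exp_neg_mul_sq (by norm_num : (0:ℝ) < 1/2)).comp_sub_right
    a).const_mul _).const_mul _

/-- Martingale property of the discounted delta-weighted stock position in the
Black-Scholes model, expressed over the lognormal (Gaussian) law: the discounted delta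
times the stock price at time t equals the expectation of Φ'(S_T) S_T / B_T. -/
theorem discounted_delta_martingale (r σ T t : ℝ) (hσ : 0 < σ)
    (ht : 0 ≤ t) (htT : t < T)
    (Φ : ℝ → ℝ) (hΦ : ContDiffOn ℝ 1 Φ (Set.Ioi 0))
    (hgrowth : ∃ C : ℝ, ∃ n : ℕ, ∀ x : ℝ, 0 < x →
      |Φ x| ≤ C * (1 + x ^ n) ∧ |deriv Φ x| ≤ C * (1 + x ^ n)) :
    ∀ s : ℝ, 0 < s →
      deriv (fun x : ℝ =>
          Real.exp (-r * (T - t)) *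
            ∫ y, Φ (x * Real.exp ((r - σ ^ 2 / 2) * (T - t) + σ * Real.sqrt (T - t) * y))
              ∂(gaussianReal 0 1)) s * s * Real.exp (-r * t)
        = ∫ y,
            deriv Φ (s * Real.exp ((r - σ ^ 2 / 2) * (T - t) + σ * Real.sqrt (T - t) * y))
              * (s * Real.exp ((r - σ ^ 2 / 2) * (T - t) + σ * Real.sqrt (T - t) * y))
              * Real.exp (-r * T) ∂(gaussianReal 0 1) := by
  intro s hs
  set A : ℝ := (r - σ ^ 2 / 2) * (T - t) with hA
  set b : ℝ := σ * Real.sqrt (T - t) with hbdef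
  have hb : 0 < b := mul_pos hσ (Real.sqrt_pos.mpr (by linarith))
  set c : ℝ → ℝ := fun y ↦ Real.exp (A + b * y) with hcdef
  have hcpos : ∀ y, 0 < c y := fun y ↦ Real.exp_pos _
  have hccont : Continuous c :=
    Real.continuous_exp.comp (continuous_const.add (continuous_const.mul continuous_id))
  obtain ⟨C, n, hCn⟩ := hgrowth
  have hC0 : 0 ≤ C := by
    have h := (hCn 1 one_pos).1
    simp only [one_pow] at h
    nlinarith [abs_nonneg (Φ 1)]
  -- integrability of powers of c
  have hck : ∀ k : ℕ, Integrable (fun y ↦ (c y) ^ k) (gaussianReal 0 1) := by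
    intro k
    have he : (fun y ↦ (c y) ^ k)
        = fun y ↦ Real.exp ((k : ℝ) * A) * Real.exp (((k : ℝ) * b) * y) := by
      ext y
      rw [hcdef, ← Real.exp_nat_mul, ← Real.exp_add]
      ring_nf
    rw [he]
    exact (_root_.integrable_exp_mul_gaussianReal _).const_mul _
  have hΦ'cont : ContinuousOn (deriv Φ) (Set.Ioi 0) :=
    hΦ.continuousOn_deriv_of_isOpen isOpen_Ioi le_rfl
  have hΦdiff : ∀ z : ℝ, 0 < z → HasDerivAt Φ (deriv Φ z) z := fun z hz ↦
    (((hΦ.differentiableOn one_ne_zero) z hz).differentiableAt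
      (isOpen_Ioi.mem_nhds hz)).hasDerivAt
  -- the parametric-integral derivative
  set F : ℝ → ℝ → ℝ := fun x y ↦ Φ (x * c y) with hF
  set F' : ℝ → ℝ → ℝ := fun x y ↦ deriv Φ (x * c y) * c y with hF'
  have hball : ∀ x ∈ Metric.ball s (s / 2), 0 < x ∧ x ≤ 3 * s / 2 := by
    intro x hx
    rw [Metric.mem_ball, Real.dist_eq, abs_lt] at hx
    constructor <;> linarith [hx.1, hx.2]
  have key := hasDerivAt_integral_of_dominated_loc_of_deriv_le
    (μ := gaussianReal 0 1) (F := F) (F' := F')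
    (bound := fun y ↦ C * (c y) ^ 1 + (C * (3 * s / 2) ^ n) * (c y) ^ (n + 1))
    (x₀ := s) (Metric.ball_mem_nhds s (half_pos hs))
    (by
      filter_upwards [Metric.ball_mem_nhds s (half_pos hs)] with x hx
      have hx0 := (hball x hx).1
      exact (hΦ.continuousOn.comp_continuous (continuous_const.mul hccont)
        fun y ↦ Set.mem_Ioi.mpr (mul_pos hx0 (hcpos y))).aestronglyMeasurable)
    (by
      refine Integrable.mono (((hck n).const_mul (C * s ^ n)).add (integrable_const C)) ?_ ?_
      · exact (hΦ.continuousOn.comp_continuous (continuous_const.mul hccont)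
          fun y ↦ Set.mem_Ioi.mpr (mul_pos hs (hcpos y))).aestronglyMeasurable
      · refine ae_of_all _ fun y ↦ ?_
        have h1 := (hCn (s * c y) (mul_pos hs (hcpos y))).1
        have h2 : C * (1 + (s * c y) ^ n) = C * s ^ n * (c y) ^ n + C := by ring
        rw [Real.norm_eq_abs, Real.norm_eq_abs]
        refine h1.trans ?_
        rw [h2]
        exact le_abs_self _)
    (by
      exact ((hΦ'cont.comp_continuous (continuous_const.mul hccont)
        fun y ↦ Set.mem_Ioi.mpr (mul_pos hs (hcpos y))).mul hccont).aestronglyMeasurable)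
    (by
      refine ae_of_all _ fun y x hx ↦ ?_
      obtain ⟨hx0, hx3⟩ := hball x hx
      have hxc : 0 < x * c y := mul_pos hx0 (hcpos y)
      have h1 := (hCn (x * c y) hxc).2
      have hpow : (x * c y) ^ n ≤ (3 * s / 2) ^ n * (c y) ^ n := by
        rw [← mul_pow]
        exact pow_le_pow_left₀ hxc.le (mul_le_mul_of_nonneg_right hx3 (hcpos y).le) n
      have : ‖F' x y‖ = |deriv Φ (x * c y)| * c y := by
        rw [hF', Real.norm_eq_abs, abs_mul, abs_of_pos (hcpos y)]
      rw [this]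
      calc |deriv Φ (x * c y)| * c y ≤ C * (1 + (x * c y) ^ n) * c y :=
            mul_le_mul_of_nonneg_right h1 (hcpos y).le
        _ = C * c y + C * ((x * c y) ^ n * c y) := by ring
        _ ≤ C * c y + C * ((3 * s / 2) ^ n * (c y) ^ n * c y) := by
            gcongr
        _ = C * (c y) ^ 1 + (C * (3 * s / 2) ^ n) * (c y) ^ (n + 1) := by ring
      )
    (((hck 1).const_mul C).add ((hck (n + 1)).const_mul _))
    (by
      refine ae_of_all _ fun y x hx ↦ ?_
      have hx0 := (hball x hx).1
      have h1 : HasDerivAt (fun x : ℝ ↦ x * c y) (c y) x := hasDerivAt_mul_const _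
      exact (hΦdiff _ (mul_pos hx0 (hcpos y))).comp x h1)
  obtain ⟨hint', hder⟩ := key
  have hG : HasDerivAt (fun x : ℝ ↦ Real.exp (-r * (T - t)) * ∫ y, F x y ∂(gaussianReal 0 1))
      (Real.exp (-r * (T - t)) * ∫ y, F' s y ∂(gaussianReal 0 1)) s := hder.const_mul _
  rw [hG.deriv]
  have hrhs : ∀ y : ℝ, deriv Φ (s * c y) * (s * c y) * Real.exp (-r * T)
      = F' s y * (s * Real.exp (-r * T)) := by
    intro y; rw [hF']; ring
  calc Real.exp (-r * (T - t)) * (∫ y, F' s y ∂(gaussianReal 0 1)) * s * Real.exp (-r * t)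
      = (∫ y, F' s y ∂(gaussianReal 0 1)) * (s * (Real.exp (-r * (T - t)) * Real.exp (-r * t)))
        := by ring
    _ = (∫ y, F' s y ∂(gaussianReal 0 1)) * (s * Real.exp (-r * T)) := by
        rw [← Real.exp_add, show -r * (T - t) + -r * t = -r * T by ring]
    _ = ∫ y, F' s y * (s * Real.exp (-r * T)) ∂(gaussianReal 0 1) :=
        (integral_mul_const _ _).symm
    _ = ∫ y, deriv Φ (s * c y) * (s * c y) * Real.exp (-r * T) ∂(gaussianReal 0 1) := by
        simp_rw [hrhs]
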